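/- Let G = (Z/p^k Z)^m with an alternating bilinear form (.,.): G × G → Z/p^k Z. For 1 ≤ i ≤ k, let q_i be the dimension of the F_p-vector space μ({h ∈ G : (h, x) ≡ 0 mod p^i for all x ∈ G}), where μ: (Z/p^k Z)^m → F_p^m is the map induced by v ↦ p^{k-1} v. Then 0 ≤ q_k ≤ q_{k-1} ≤ ... ≤ q_1 ≤ m and q_i ≡ m (mod 2) for all i. -/

import Mathlib

open scoped Matrix

def sympJ (g : ℕ) (R : Type) [CommRing R] : Matrix (Fin (2*g)) (Fin (2*g)) R :=
  fun i j => if (i : ℕ) + (j : ℕ) = 2*g - 1 then (if (i : ℕ) < (j : ℕ) then 1 else -1) else 0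

def symp (g : ℕ) (R : Type) [CommRing R] (x y : Fin (2*g) → R) : R :=
  x ⬝ᵥ (sympJ g R).mulVec y

/-- The `i`-th invariant of an alternating bilinear form `B` on `(ℤ/p^kℤ)^m`: the
`𝔽_p`-dimension of the image under `μ : v ↦ p^{k-1}v` (identified with reduction mod `p`)
of the set of `h` with `B(h, x) ≡ 0 mod p^i` for all `x`. -/
noncomputable def qinv (p k m : ℕ)
    (B : (Fin m → ZMod (p^k)) →ₗ[ZMod (p^k)] (Fin m → ZMod (p^k)) →ₗ[ZMod (p^k)] ZMod (p^k))
    (i : ℕ) : ℕ :=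
  Module.finrank (ZMod p) (Submodule.span (ZMod p)
    (Set.image (fun h : Fin m → ZMod (p^k) => fun j => (((h j).val : ℕ) : ZMod p))
      {h | ∀ x, ∃ c, B h x = (p : ZMod (p^k))^i * c}))

namespace S5

variable {p k : ℕ}

noncomputable def redh (p k : ℕ) (hk : 1 ≤ k) : ZMod (p^k) →+* ZMod p :=
  ZMod.castHom (dvd_pow_self p (by omega)) (ZMod p)

lemma red_eq (hp : p.Prime) (hk : 1 ≤ k) (z : ZMod (p^k)) :
    (((z.val : ℕ)) : ZMod p) = redh p k hk z := by
  haveI : NeZero (p^k) := ⟨pow_ne_zero _ hp.ne_zero⟩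
  rw [ZMod.natCast_val]
  rfl

lemma red_surj (hp : p.Prime) (hk : 1 ≤ k) : Function.Surjective (redh p k hk) := by
  haveI : NeZero p := ⟨hp.ne_zero⟩
  intro v
  refine ⟨((v.val : ℕ) : ZMod (p^k)), ?_⟩
  rw [← red_eq hp hk]
  haveI : NeZero (p^k) := ⟨pow_ne_zero _ hp.ne_zero⟩
  rw [ZMod.val_cast_of_lt]
  · exact ZMod.natCast_rightInverse v
  · calc v.val < p := ZMod.val_lt v
      _ ≤ p^k := Nat.le_self_pow (by omega) p

lemma ppow_k_eq_zero (hk : 1 ≤ k) : (p : ZMod (p^k))^k = 0 := by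
  have : ((p^k : ℕ) : ZMod (p^k)) = 0 := ZMod.natCast_self _
  push_cast at this
  exact this

lemma red_eq_zero_iff (hp : p.Prime) (hk : 1 ≤ k) (z : ZMod (p^k)) :
    redh p k hk z = 0 ↔ (p : ZMod (p^k)) ∣ z := by
  haveI : NeZero (p^k) := ⟨pow_ne_zero _ hp.ne_zero⟩
  constructor
  · intro h
    rw [← red_eq hp hk] at h
    have hd : p ∣ z.val := by
      rwa [ZMod.natCast_eq_zero_iff] at h
    obtain ⟨t, ht⟩ := hd
    refine ⟨(t : ZMod (p^k)), ?_⟩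
    have : ((z.val : ℕ) : ZMod (p^k)) = z := ZMod.natCast_rightInverse z
    rw [← this, ht]
    push_cast; ring
  · rintro ⟨w, rfl⟩
    rw [map_mul]
    have : redh p k hk (p : ZMod (p^k)) = 0 := by
      rw [map_natCast, ZMod.natCast_self]
    rw [this, zero_mul]

lemma not_isUnit_imp_dvd (hp : p.Prime) (hk : 1 ≤ k) (z : ZMod (p^k)) (h : ¬ IsUnit z) :
    (p : ZMod (p^k)) ∣ z := by
  haveI : NeZero (p^k) := ⟨pow_ne_zero _ hp.ne_zero⟩
  rw [← red_eq_zero_iff hp hk]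
  by_contra hne
  apply h
  have hz : ((z.val : ℕ) : ZMod (p^k)) = z := ZMod.natCast_rightInverse z
  rw [← hz, ZMod.isUnit_iff_coprime]
  apply Nat.Coprime.pow_right
  rw [Nat.coprime_comm, hp.coprime_iff_not_dvd]
  intro hd
  apply hne
  rw [← red_eq hp hk]
  rwa [ZMod.natCast_eq_zero_iff]

lemma pow_dvd_pow_mul_iff (hp : p.Prime) {e i : ℕ} (he : e ≤ i) (hik : i ≤ k)
    (z : ZMod (p^k)) :
    (p : ZMod (p^k))^i ∣ (p : ZMod (p^k))^e * z ↔ (p : ZMod (p^k))^(i-e) ∣ z := by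
  haveI : NeZero (p^k) := ⟨pow_ne_zero _ hp.ne_zero⟩
  constructor
  · rintro ⟨t, ht⟩
    have hz : ((z.val : ℕ) : ZMod (p^k)) = z := ZMod.natCast_rightInverse z
    have htv : ((t.val : ℕ) : ZMod (p^k)) = t := ZMod.natCast_rightInverse t
    have h1 : (p^e * z.val) ≡ (p^i * t.val) [MOD p^k] := by
      rw [← ZMod.natCast_eq_natCast_iff]
      push_cast [hz, htv]
      exact ht
    have h2 : ((p:ℤ)^k) ∣ ((p:ℤ)^i * t.val - (p:ℤ)^e * z.val) := by
      have := h1.dvd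
      push_cast at this ⊢
      exact this
    have hpe : (p:ℤ)^e * (p:ℤ)^(i-e) = (p:ℤ)^i := by rw [← pow_add]; congr 1; omega
    have hpk : (p:ℤ)^e * (p:ℤ)^(k-e) = (p:ℤ)^k := by rw [← pow_add]; congr 1; omega
    have h3 : (p:ℤ)^(k-e) ∣ ((p:ℤ)^(i-e) * t.val - z.val) := by
      rw [← hpk] at h2
      rw [show ((p:ℤ)^i * t.val - (p:ℤ)^e * z.val) = (p:ℤ)^e * ((p:ℤ)^(i-e) * t.val - z.val) by
        rw [mul_sub, ← mul_assoc, hpe]] at h2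
      exact (mul_dvd_mul_iff_left (pow_ne_zero e (by exact_mod_cast hp.ne_zero))).mp h2
    obtain ⟨w, hw⟩ := h3
    refine ⟨t - (p : ZMod (p^k))^(k-i) * ((w : ℤ) : ZMod (p^k)), ?_⟩
    have hzz : (((z.val : ℤ)) : ZMod (p^k)) = z := by push_cast [hz]; rfl
    have h4 : ((z.val : ℤ)) = (p:ℤ)^(i-e) * t.val - (p:ℤ)^(k-e) * w := by omega
    calc z = (((z.val : ℤ)) : ZMod (p^k)) := hzz.symm
      _ = (((p:ℤ)^(i-e) * t.val - (p:ℤ)^(k-e) * w : ℤ) : ZMod (p^k)) := by rw [h4]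
      _ = (p : ZMod (p^k))^(i-e) * (t - (p : ZMod (p^k))^(k-i) * ((w : ℤ) : ZMod (p^k))) := by
          push_cast [htv]
          rw [show (p : ZMod (p^k))^(k-e) = (p : ZMod (p^k))^(i-e) * (p : ZMod (p^k))^(k-i) by
            rw [← pow_add]; congr 1; omega]
          ring
  · rintro ⟨w, rfl⟩
    exact ⟨w, by rw [← mul_assoc, ← pow_add]; congr 2; omega⟩

/-- generic linear-combination map -/
noncomputable def lc {A : Type} [CommSemiring A] {ι : Type} [Fintype ι] {M : Type}
    [AddCommMonoid M] [Module A M] (w : ι → M) : (ι → A) →ₗ[A] M :=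
  ∑ t, (LinearMap.proj t).smulRight (w t)

lemma lc_apply {A : Type} [CommSemiring A] {ι : Type} [Fintype ι] {M : Type}
    [AddCommMonoid M] [Module A M] (w : ι → M) (g : ι → A) :
    lc w g = ∑ t, g t • w t := by
  simp [lc]

/-- the set of `p^i`-radical vectors -/
def Hset (p k m : ℕ)
    (B : (Fin m → ZMod (p^k)) →ₗ[ZMod (p^k)] (Fin m → ZMod (p^k)) →ₗ[ZMod (p^k)] ZMod (p^k))
    (i : ℕ) : Set (Fin m → ZMod (p^k)) :=
  {h | ∀ x, (p : ZMod (p^k))^i ∣ B h x}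

noncomputable def mu (p k m : ℕ) (hk : 1 ≤ k) (h : Fin m → ZMod (p^k)) : Fin m → ZMod p :=
  fun j => redh p k hk (h j)

noncomputable def qB (p k m : ℕ) (hk : 1 ≤ k)
    (B : (Fin m → ZMod (p^k)) →ₗ[ZMod (p^k)] (Fin m → ZMod (p^k)) →ₗ[ZMod (p^k)] ZMod (p^k))
    (i : ℕ) : ℕ :=
  Module.finrank (ZMod p) (Submodule.span (ZMod p) (mu p k m hk '' Hset p k m B i))



noncomputable def qinv' (p k m : ℕ)
    (B : (Fin m → ZMod (p^k)) →ₗ[ZMod (p^k)] (Fin m → ZMod (p^k)) →ₗ[ZMod (p^k)] ZMod (p^k))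
    (i : ℕ) : ℕ :=
  Module.finrank (ZMod p) (Submodule.span (ZMod p)
    (Set.image (fun h : Fin m → ZMod (p^k) => fun j => (((h j).val : ℕ) : ZMod p))
      {h | ∀ x, ∃ c, B h x = (p : ZMod (p^k))^i * c}))

variable {p k : ℕ}

lemma qinv'_eq_qB (hp : p.Prime) (hk : 1 ≤ k) (m : ℕ)
    (B : (Fin m → ZMod (p^k)) →ₗ[ZMod (p^k)] (Fin m → ZMod (p^k)) →ₗ[ZMod (p^k)] ZMod (p^k))
    (i : ℕ) : qinv' p k m B i = qB p k m hk B i := by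
  unfold qinv' qB
  have h1 : (fun h : Fin m → ZMod (p^k) => fun j => (((h j).val : ℕ) : ZMod p))
      = mu p k m hk := by
    funext h j
    exact red_eq hp hk (h j)
  have h2 : {h : Fin m → ZMod (p^k) | ∀ x, ∃ c, B h x = (p : ZMod (p^k))^i * c}
      = Hset p k m B i := by
    ext h
    simp only [Hset, Set.mem_setOf_eq, dvd_def]
  rw [h1, h2]

lemma mu_surj (hp : p.Prime) (hk : 1 ≤ k) (m : ℕ) :
    Function.Surjective (mu p k m hk) := by
  intro v
  have := fun j => red_surj hp hk (v j)
  choose h hh using this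
  exact ⟨h, funext hh⟩

lemma qB_le (hp : p.Prime) (hk : 1 ≤ k) (m : ℕ)
    (B : (Fin m → ZMod (p^k)) →ₗ[ZMod (p^k)] (Fin m → ZMod (p^k)) →ₗ[ZMod (p^k)] ZMod (p^k))
    (i : ℕ) : qB p k m hk B i ≤ m := by
  haveI := Fact.mk hp
  calc qB p k m hk B i ≤ Module.finrank (ZMod p) (Fin m → ZMod p) := Submodule.finrank_le _
    _ = m := by simp [Module.finrank_pi]

lemma qB_mono (hp : p.Prime) (hk : 1 ≤ k) (m : ℕ)
    (B : (Fin m → ZMod (p^k)) →ₗ[ZMod (p^k)] (Fin m → ZMod (p^k)) →ₗ[ZMod (p^k)] ZMod (p^k))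
    (i j : ℕ) (hij : i ≤ j) : qB p k m hk B j ≤ qB p k m hk B i := by
  haveI := Fact.mk hp
  apply Submodule.finrank_mono
  apply Submodule.span_mono
  apply Set.image_mono
  intro h hh x
  exact dvd_trans (pow_dvd_pow _ hij) (hh x)

lemma qB_univ (hp : p.Prime) (hk : 1 ≤ k) (m : ℕ)
    (B : (Fin m → ZMod (p^k)) →ₗ[ZMod (p^k)] (Fin m → ZMod (p^k)) →ₗ[ZMod (p^k)] ZMod (p^k))
    (i : ℕ) (hall : ∀ a b, (p : ZMod (p^k))^i ∣ B a b) :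
    qB p k m hk B i = m := by
  haveI := Fact.mk hp
  have h1 : Hset p k m B i = Set.univ := by
    ext h; simp only [Hset, Set.mem_setOf_eq, Set.mem_univ, iff_true]
    exact fun x => hall h x
  unfold qB
  rw [h1, Set.image_univ, Set.range_eq_univ.mpr (mu_surj hp hk m), Submodule.span_univ,
    finrank_top]
  simp [Module.finrank_pi]

end S5

namespace S5x
open S5

variable {p k : ℕ}

set_option maxHeartbeats 1000000 in
lemma step (hp : p.Prime) (hk : 1 ≤ k) (n : ℕ)
    (B : (Fin (n+2) → ZMod (p^k)) →ₗ[ZMod (p^k)] (Fin (n+2) → ZMod (p^k)) →ₗ[ZMod (p^k)] ZMod (p^k))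
    (hB : ∀ a, B a a = 0) (i e : ℕ) (hie : e + 1 ≤ i) (hik : i ≤ k)
    (hdvd : ∀ a b, (p : ZMod (p^k))^e ∣ B a b)
    (x y : Fin (n+2) → ZMod (p^k)) (hxy : ¬ (p : ZMod (p^k))^(e+1) ∣ B x y) :
    ∃ B' : (Fin n → ZMod (p^k)) →ₗ[ZMod (p^k)] (Fin n → ZMod (p^k)) →ₗ[ZMod (p^k)] ZMod (p^k),
      (∀ a, B' a a = 0) ∧ qB p k (n+2) hk B i = qB p k n hk B' i := by
  haveI := Fact.mk hp
  haveI : NeZero (p^k) := ⟨pow_ne_zero _ hp.ne_zero⟩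
  -- skew symmetry
  have skew : ∀ a b, B a b = - B b a := by
    intro a b
    have h := hB (a + b)
    simp only [map_add, LinearMap.add_apply] at h
    rw [hB a, hB b] at h
    linear_combination h
  -- the pivot scalar is a unit
  obtain ⟨c, hc⟩ := hdvd x y
  have hcu : IsUnit c := by
    by_contra hcu
    obtain ⟨c', hc'⟩ := not_isUnit_imp_dvd hp hk c hcu
    exact hxy ⟨c', by rw [hc, hc', pow_succ]; ring⟩
  obtain ⟨cu, hcu'⟩ := hcu
  have hinv : (↑cu⁻¹ : ZMod (p^k)) * c = 1 := by rw [← hcu']; exact cu.inv_mul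
  -- x is not divisible by p : get a coordinate with nonzero reduction
  have hxa : ∃ a, redh p k hk (x a) ≠ 0 := by
    by_contra hh
    push_neg at hh
    have : ∀ j, (p : ZMod (p^k)) ∣ x j := fun j => (red_eq_zero_iff hp hk _).mp (hh j)
    choose x0 hx0 using this
    have hxx : x = (p : ZMod (p^k)) • x0 := funext fun j => by
      rw [Pi.smul_apply, smul_eq_mul, ← hx0 j]
    obtain ⟨d, hd⟩ := hdvd x0 y
    apply hxy
    refine ⟨d, ?_⟩
    rw [hxx, map_smul, LinearMap.smul_apply, smul_eq_mul, hd, pow_succ]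
    ring
  obtain ⟨a, hxa⟩ := hxa
  -- y is not a multiple of x modulo p
  have hyt : ∀ t : ZMod (p^k), ¬ ∀ j, (p : ZMod (p^k)) ∣ (y j - t * x j) := by
    intro t hall
    choose z hz using hall
    have hy : y = t • x + (p : ZMod (p^k)) • z := funext fun j => by
      rw [Pi.add_apply, Pi.smul_apply, Pi.smul_apply, smul_eq_mul, smul_eq_mul]
      linear_combination hz j
    obtain ⟨d, hd⟩ := hdvd x z
    apply hxy
    refine ⟨d, ?_⟩
    rw [hy, map_add, map_smul, map_smul, smul_eq_mul, smul_eq_mul, hB x, hd, pow_succ]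
    ring
  -- a second coordinate giving an invertible 2x2 minor
  obtain ⟨b, hba, hD⟩ : ∃ b, b ≠ a ∧
      redh p k hk (x a) * redh p k hk (y b) - redh p k hk (x b) * redh p k hk (y a) ≠ 0 := by
    obtain ⟨t, ht⟩ := red_surj hp hk (redh p k hk (y a) * (redh p k hk (x a))⁻¹)
    by_contra hh
    push_neg at hh
    apply hyt t
    intro j
    rw [← red_eq_zero_iff hp hk, map_sub, map_mul, ht]
    by_cases hj : j = a
    · subst hj
      field_simp
      ring
    · have h := hh j (by exact hj)
      -- x a * y j - x j * y a = 0  over the field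
      have hxa' := hxa
      field_simp
      linear_combination h
  -- permutation placing a, b at positions 0, 1
  have h01 : (0 : Fin (n+2)) ≠ 1 := by simp [Fin.ext_iff]
  set τ := Equiv.swap (0 : Fin (n+2)) a with hτ
  have hb'0 : τ b ≠ 0 := by
    intro hh
    apply hba
    have h2 : b = τ 0 := by rw [← hh]; exact (Equiv.swap_apply_self _ _ _).symm
    rw [h2]
    exact Equiv.swap_apply_left 0 a
  set σ := (Equiv.swap (1 : Fin (n+2)) (τ b)).trans τ with hσ
  have hσ0 : σ 0 = a := by
    simp only [hσ, Equiv.trans_apply]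
    rw [Equiv.swap_apply_of_ne_of_ne h01 (Ne.symm hb'0)]
    exact Equiv.swap_apply_left 0 a
  have hσ1 : σ 1 = b := by
    simp only [hσ, Equiv.trans_apply, Equiv.swap_apply_left]
    exact Equiv.swap_apply_self 0 a b
  set J : Fin n → Fin (n+2) := fun t => σ (t.succ.succ) with hJ
  have hJa : ∀ t, J t ≠ a := by
    intro t hh
    rw [← hσ0] at hh
    exact Fin.succ_ne_zero _ (σ.injective hh)
  have hJb : ∀ t, J t ≠ b := by
    intro t hh
    rw [← hσ1] at hh
    have h2 := σ.injective hh
    rw [← Fin.succ_zero_eq_one] at h2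
    exact Fin.succ_ne_zero t (Fin.succ_injective _ h2)
  have hJinj : Function.Injective J := fun t₁ t₂ hh =>
    Fin.succ_injective _ (Fin.succ_injective _ (σ.injective hh))
  -- corrected vectors
  set ε : Fin (n+2) → (Fin (n+2) → ZMod (p^k)) := fun j => Pi.single j 1 with hε
  choose cc hcc using fun j => hdvd (ε j) y
  choose dd hdd using fun j => hdvd (ε j) x
  set v : Fin (n+2) → (Fin (n+2) → ZMod (p^k)) :=
    fun j => ε j - (cc j * ↑cu⁻¹) • x + (dd j * ↑cu⁻¹) • y with hv
  have hyx : B y x = -((p : ZMod (p^k))^e * c) := by rw [skew, hc]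
  have hvx : ∀ j, B (v j) x = 0 := by
    intro j
    simp only [hv, map_add, map_sub, map_smul, LinearMap.add_apply, LinearMap.sub_apply,
      LinearMap.smul_apply, smul_eq_mul]
    rw [hdd j, hB x, hyx]
    linear_combination (-((p : ZMod (p^k))^e * dd j)) * hinv
  have hvy : ∀ j, B (v j) y = 0 := by
    intro j
    simp only [hv, map_add, map_sub, map_smul, LinearMap.add_apply, LinearMap.sub_apply,
      LinearMap.smul_apply, smul_eq_mul]
    rw [hcc j, hc, hB y]
    linear_combination (-((p : ZMod (p^k))^e * cc j)) * hinv
  have hxv : ∀ j, B x (v j) = 0 := fun j => by rw [skew x (v j), hvx j, neg_zero]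
  have hyv : ∀ j, B y (v j) = 0 := fun j => by rw [skew y (v j), hvy j, neg_zero]
  -- the complement map and restricted form
  set ψ : (Fin n → ZMod (p^k)) →ₗ[ZMod (p^k)] (Fin (n+2) → ZMod (p^k)) :=
    lc (fun t => v (J t)) with hψdef
  set B' := B.compl₁₂ ψ ψ with hB'def
  have hB'app : ∀ a' b', B' a' b' = B (ψ a') (ψ b') := fun a' b' => rfl
  have hB'alt : ∀ a', B' a' a' = 0 := fun a' => hB (ψ a')
  have hxψ : ∀ a', B x (ψ a') = 0 := by
    intro a'
    rw [hψdef]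
    simp only [lc_apply, map_sum, map_smul, hxv, smul_eq_mul, mul_zero, Finset.sum_const_zero]
  have hyψ : ∀ a', B y (ψ a') = 0 := by
    intro a'
    rw [hψdef]
    simp only [lc_apply, map_sum, map_smul, hyv, smul_eq_mul, mul_zero, Finset.sum_const_zero]
  have hψx : ∀ a', B (ψ a') x = 0 := fun a' => by rw [skew, hxψ, neg_zero]
  have hψy : ∀ a', B (ψ a') y = 0 := fun a' => by rw [skew, hyψ, neg_zero]
  -- the full family and its linear map
  set w : Fin (n+2) → (Fin (n+2) → ZMod (p^k)) :=
    Fin.cons x (Fin.cons y (fun t => v (J t))) with hw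
  set Φ : (Fin (n+2) → ZMod (p^k)) →ₗ[ZMod (p^k)] (Fin (n+2) → ZMod (p^k)) := lc w with hΦdef
  have hw0 : w 0 = x := by rw [hw]; exact Fin.cons_zero _ _
  have hw1s : w (Fin.succ 0) = y := by rw [hw, Fin.cons_succ, Fin.cons_zero]
  have hws : ∀ t : Fin n, w t.succ.succ = v (J t) := fun t => by
    rw [hw, Fin.cons_succ, Fin.cons_succ]
  have hw1 : w 1 = y := by rw [← Fin.succ_zero_eq_one]; exact hw1s
  have hΦexp : ∀ g, Φ g = g 0 • x + g 1 • y + ψ (fun t => g t.succ.succ) := by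
    intro g
    rw [hΦdef, hψdef]
    simp only [lc_apply]
    rw [Fin.sum_univ_succ, Fin.sum_univ_succ]
    simp only [hw0, hw1, hw1s, hws, Fin.succ_zero_eq_one]
    abel
  -- mod p data
  set wb : Fin (n+2) → (Fin (n+2) → ZMod p) := fun t => mu p k (n+2) hk (w t) with hwb
  set Φb : (Fin (n+2) → ZMod p) →ₗ[ZMod p] (Fin (n+2) → ZMod p) := lc wb with hΦb
  have hmuΦ : ∀ g, mu p k (n+2) hk (Φ g) = Φb (fun t => redh p k hk (g t)) := by
    intro g
    funext idx
    simp only [mu, hΦdef, hΦb, lc_apply, Finset.sum_apply, Pi.smul_apply, smul_eq_mul,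
      map_sum, map_mul, hwb]
  -- injectivity of the reduced map
  have hker : ∀ g : Fin (n+2) → ZMod p, Φb g = 0 → g = 0 := by
    intro g hg0
    set γ : Fin (n+2) → ZMod p := fun j => redh p k hk (cc j * ↑cu⁻¹) with hγ
    set δ : Fin (n+2) → ZMod p := fun j => redh p k hk (dd j * ↑cu⁻¹) with hδ
    set xb : Fin (n+2) → ZMod p := mu p k (n+2) hk x with hxb
    set yb : Fin (n+2) → ZMod p := mu p k (n+2) hk y with hyb2
    have hvb : ∀ j idx, mu p k (n+2) hk (v j) idx
        = (if idx = j then 1 else 0) - γ j * xb idx + δ j * yb idx := by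
      intro j idx
      simp only [mu, hv, hε, Pi.add_apply, Pi.sub_apply, Pi.smul_apply, smul_eq_mul,
        map_add, map_sub, map_mul, Pi.single_apply, apply_ite (redh p k hk), map_one, map_zero,
        hγ, hδ, hxb, hyb2]
    set s := g 0 - ∑ t : Fin n, g t.succ.succ * γ (J t) with hs
    set r := g 1 + ∑ t : Fin n, g t.succ.succ * δ (J t) with hr
    have hE : ∀ idx, s * xb idx + r * yb idx
        + (∑ t : Fin n, g t.succ.succ * (if idx = J t then 1 else 0)) = 0 := by
      intro idx
      have h0 := congrFun hg0 idx
      rw [Pi.zero_apply] at h0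
      have hexp : Φb g idx = g 0 * xb idx + g 1 * yb idx
          + ∑ t : Fin n, g t.succ.succ * (mu p k (n+2) hk (v (J t)) idx) := by
        rw [hΦb]
        simp only [lc_apply, Finset.sum_apply, Pi.smul_apply, smul_eq_mul]
        rw [Fin.sum_univ_succ, Fin.sum_univ_succ]
        simp only [hwb, hw0, hw1, hw1s, hws, Fin.succ_zero_eq_one, hxb, hyb2]
        ring
      rw [hexp] at h0
      have heq : s * xb idx + r * yb idx
          + (∑ t : Fin n, g t.succ.succ * (if idx = J t then 1 else 0))
          = g 0 * xb idx + g 1 * yb idx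
          + ∑ t : Fin n, g t.succ.succ * (mu p k (n+2) hk (v (J t)) idx) := by
        simp only [hvb]
        have hsplit : ∑ t : Fin n, g t.succ.succ
              * ((if idx = J t then 1 else 0) - γ (J t) * xb idx + δ (J t) * yb idx)
            = (∑ t : Fin n, g t.succ.succ * (if idx = J t then 1 else 0))
              - (∑ t : Fin n, g t.succ.succ * γ (J t)) * xb idx
              + (∑ t : Fin n, g t.succ.succ * δ (J t)) * yb idx := by
          rw [Finset.sum_mul, Finset.sum_mul, ← Finset.sum_sub_distrib, ← Finset.sum_add_distrib]
          exact Finset.sum_congr rfl fun t _ => by ring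
        rw [hsplit, hs, hr]
        ring
      rw [heq]
      exact h0
    have hEa : s * xb a + r * yb a = 0 := by
      have h1 := hE a
      have h2 : (∑ t : Fin n, g t.succ.succ * (if a = J t then 1 else 0)) = 0 :=
        Finset.sum_eq_zero fun t _ => by rw [if_neg fun hh => hJa t hh.symm, mul_zero]
      rw [h2, add_zero] at h1
      exact h1
    have hEb : s * xb b + r * yb b = 0 := by
      have h1 := hE b
      have h2 : (∑ t : Fin n, g t.succ.succ * (if b = J t then 1 else 0)) = 0 :=
        Finset.sum_eq_zero fun t _ => by rw [if_neg fun hh => hJb t hh.symm, mul_zero]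
      rw [h2, add_zero] at h1
      exact h1
    have hDq : xb a * yb b - xb b * yb a ≠ 0 := hD
    have hs0 : s = 0 := by
      have h3 : s * (xb a * yb b - xb b * yb a) = 0 := by
        linear_combination yb b * hEa - yb a * hEb
      rcases mul_eq_zero.mp h3 with h | h
      · exact h
      · exact absurd h hDq
    have hr0 : r = 0 := by
      have h3 : r * (xb a * yb b - xb b * yb a) = 0 := by
        linear_combination xb a * hEb - xb b * hEa
      rcases mul_eq_zero.mp h3 with h | h
      · exact h
      · exact absurd h hDq
    have hgt : ∀ t₀ : Fin n, g t₀.succ.succ = 0 := by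
      intro t₀
      have h1 := hE (J t₀)
      rw [hs0, hr0, zero_mul, zero_mul, zero_add, zero_add] at h1
      rw [Finset.sum_eq_single t₀ (fun t _ ht => by
        rw [if_neg fun hh => ht (hJinj hh).symm, mul_zero])
        (fun hmem => absurd (Finset.mem_univ t₀) hmem)] at h1
      rwa [if_pos rfl, mul_one] at h1
    have hsum0 : ∀ f : Fin n → ZMod p, (∑ t : Fin n, g t.succ.succ * f t) = 0 :=
      fun f => Finset.sum_eq_zero fun t _ => by rw [hgt t, zero_mul]
    have hg0' : g 0 = 0 := by
      have h4 : g 0 - ∑ t : Fin n, g t.succ.succ * γ (J t) = 0 := by rw [← hs]; exact hs0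
      rw [hsum0 (fun t => γ (J t)), sub_zero] at h4
      exact h4
    have hg1' : g 1 = 0 := by
      have h4 : g 1 + ∑ t : Fin n, g t.succ.succ * δ (J t) = 0 := by rw [← hr]; exact hr0
      rw [hsum0 (fun t => δ (J t)), add_zero] at h4
      exact h4
    funext t
    rw [Pi.zero_apply]
    refine Fin.cases ?_ (fun t' => ?_) t
    · exact hg0'
    · refine Fin.cases ?_ (fun t'' => ?_) t'
      · rw [Fin.succ_zero_eq_one]; exact hg1'
      · exact hgt t''
  have hΦbinj : Function.Injective Φb := by
    intro g₁ g₂ hgg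
    have h5 := hker (g₁ - g₂) (by rw [map_sub, hgg, sub_self])
    exact sub_eq_zero.mp h5
  have hΦbsurj : Function.Surjective Φb := LinearMap.injective_iff_surjective.mp hΦbinj
  have hΦsurj : Function.Surjective Φ := by
    have main : ∀ j' : ℕ, ∀ h : Fin (n+2) → ZMod (p^k),
        ∃ g z, h = Φ g + (p : ZMod (p^k))^j' • z := by
      intro j'
      induction j' with
      | zero =>
        intro h
        exact ⟨0, h, by rw [map_zero, pow_zero, one_smul, zero_add]⟩
      | succ j ihj =>
        intro h
        obtain ⟨g, z, hgz⟩ := ihj h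
        obtain ⟨gb, hgb⟩ := hΦbsurj (mu p k (n+2) hk z)
        obtain ⟨g', hg'⟩ : ∃ g' : Fin (n+2) → ZMod (p^k),
            ∀ t, redh p k hk (g' t) = gb t := by
          choose g' hg' using fun t => red_surj hp hk (gb t)
          exact ⟨g', hg'⟩
        have hmz : mu p k (n+2) hk (Φ g') = mu p k (n+2) hk z := by
          rw [hmuΦ, show (fun t => redh p k hk (g' t)) = gb from funext hg']
          exact hgb
        have hdv : ∀ jdx, (p : ZMod (p^k)) ∣ (z jdx - Φ g' jdx) := by
          intro jdx
          rw [← red_eq_zero_iff hp hk, map_sub]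
          have h6 := congrFun hmz jdx
          simp only [mu] at h6
          rw [h6, sub_self]
        choose z2 hz2 using hdv
        refine ⟨g + (p : ZMod (p^k))^j • g', z2, ?_⟩
        rw [map_add, map_smul]
        have hz' : z = Φ g' + (p : ZMod (p^k)) • z2 := funext fun jdx => by
          rw [Pi.add_apply, Pi.smul_apply, smul_eq_mul, ← hz2 jdx]; ring
        rw [hgz, hz', smul_add, smul_smul, ← pow_succ, ← add_assoc]
    intro h
    obtain ⟨g, z, hgz⟩ := main k h
    exact ⟨g, by rw [hgz, ppow_k_eq_zero hk, zero_smul, add_zero]⟩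
  have hpei : (p : ZMod (p^k))^e * (p : ZMod (p^k))^(i-e) = (p : ZMod (p^k))^i := by
    rw [← pow_add]; congr 1; omega
  have hBx : ∀ g, B (Φ g) x = -((p : ZMod (p^k))^e * (g 1 * c)) := by
    intro g
    rw [hΦexp g]
    simp only [map_add, LinearMap.add_apply, LinearMap.smul_apply, map_smul, smul_eq_mul]
    rw [hB x, hyx, hψx]
    ring
  have hBy : ∀ g, B (Φ g) y = (p : ZMod (p^k))^e * (g 0 * c) := by
    intro g
    rw [hΦexp g]
    simp only [map_add, LinearMap.add_apply, LinearMap.smul_apply, map_smul, smul_eq_mul]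
    rw [hB y, hc, hψy]
    ring
  have hBψr : ∀ g z', B (Φ g) (ψ z') = B' (fun t => g t.succ.succ) z' := by
    intro g z'
    rw [hΦexp g]
    simp only [map_add, LinearMap.add_apply, LinearMap.smul_apply, map_smul, smul_eq_mul]
    rw [hxψ, hyψ, hB'app]
    ring
  have hmem : ∀ h, h ∈ Hset p k (n+2) B i ↔
      ∃ g, Φ g = h ∧ (p : ZMod (p^k))^(i-e) ∣ g 0 ∧ (p : ZMod (p^k))^(i-e) ∣ g 1 ∧
        (fun t => g t.succ.succ) ∈ Hset p k n B' i := by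
    intro h
    constructor
    · intro hh
      obtain ⟨g, hg⟩ := hΦsurj h
      refine ⟨g, hg, ?_, ?_, ?_⟩
      · have h7 := hh y
        rw [← hg, hBy] at h7
        have h8 : (p : ZMod (p^k))^(i-e) ∣ g 0 * c :=
          (pow_dvd_pow_mul_iff hp (by omega) hik _).mp h7
        rw [← hcu'] at h8
        exact Units.dvd_mul_right.mp h8
      · have h7 := hh x
        rw [← hg, hBx, dvd_neg] at h7
        have h8 : (p : ZMod (p^k))^(i-e) ∣ g 1 * c :=
          (pow_dvd_pow_mul_iff hp (by omega) hik _).mp h7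
        rw [← hcu'] at h8
        exact Units.dvd_mul_right.mp h8
      · intro z'
        have h7 := hh (ψ z')
        rw [← hg, hBψr] at h7
        exact h7
    · rintro ⟨g, rfl, h0, h1, htail⟩
      intro z
      obtain ⟨g₂, rfl⟩ := hΦsurj z
      have hexp2 : B (Φ g) (Φ g₂) = g₂ 0 * B (Φ g) x + g₂ 1 * B (Φ g) y
          + B' (fun t => g t.succ.succ) (fun t => g₂ t.succ.succ) := by
        rw [← hBψr, hΦexp g₂, map_add, map_add, map_smul, map_smul, smul_eq_mul, smul_eq_mul]
      rw [hexp2]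
      apply dvd_add
      apply dvd_add
      · rw [hBx]
        obtain ⟨s, hs⟩ := h1
        refine ⟨-(g₂ 0 * s * c), ?_⟩
        rw [hs]
        linear_combination (-(g₂ 0 * s * c)) * hpei
      · rw [hBy]
        obtain ⟨s, hs⟩ := h0
        refine ⟨g₂ 1 * s * c, ?_⟩
        rw [hs]
        linear_combination (g₂ 1 * s * c) * hpei
      · exact htail _
  set Θ : (Fin n → ZMod p) →ₗ[ZMod p] (Fin (n+2) → ZMod p) :=
    lc (fun t => wb t.succ.succ) with hΘ
  have hΘΦb : ∀ a' : Fin n → ZMod p, Θ a' = Φb (Fin.cons 0 (Fin.cons 0 a')) := by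
    intro a'
    rw [hΘ, hΦb]
    simp only [lc_apply]
    rw [Fin.sum_univ_succ, Fin.sum_univ_succ]
    simp only [Fin.cons_zero, Fin.cons_succ, zero_smul, zero_add]
  have hΘinj : Function.Injective Θ := by
    intro a₁ a₂ hth
    rw [hΘΦb, hΘΦb] at hth
    have h10 := hΦbinj hth
    funext t
    have h9 := congrFun h10 t.succ.succ
    simpa [Fin.cons_succ] using h9
  have himg : mu p k (n+2) hk '' Hset p k (n+2) B i
      = Θ '' (mu p k n hk '' Hset p k n B' i) := by
    ext vv
    constructor
    · rintro ⟨h, hh, rfl⟩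
      obtain ⟨g, rfl, h0, h1, htail⟩ := (hmem h).mp hh
      refine ⟨mu p k n hk (fun t => g t.succ.succ), ⟨_, htail, rfl⟩, ?_⟩
      rw [hΘΦb, hmuΦ g]
      congr 1
      funext t
      refine Fin.cases ?_ (fun t' => ?_) t
      · rw [Fin.cons_zero]
        exact ((red_eq_zero_iff hp hk _).mpr (dvd_trans (dvd_pow_self (p : ZMod (p^k)) (show i - e ≠ 0 by omega)) h0)).symm
      · refine Fin.cases ?_ (fun t'' => ?_) t'
        · rw [Fin.cons_succ, Fin.cons_zero, Fin.succ_zero_eq_one]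
          exact ((red_eq_zero_iff hp hk _).mpr (dvd_trans (dvd_pow_self (p : ZMod (p^k)) (show i - e ≠ 0 by omega)) h1)).symm
        · rw [Fin.cons_succ, Fin.cons_succ]
          rfl
    · rintro ⟨vb, ⟨a', ha', rfl⟩, rfl⟩
      set g2 : Fin (n+2) → ZMod (p^k) := Fin.cons 0 (Fin.cons 0 a') with hg2def
      have hg0 : g2 0 = 0 := Fin.cons_zero _ _
      have hg1 : g2 1 = 0 := by
        rw [hg2def, ← Fin.succ_zero_eq_one, Fin.cons_succ]
        exact Fin.cons_zero _ _
      have hgt : ∀ t : Fin n, g2 t.succ.succ = a' t := fun t => by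
        rw [hg2def, Fin.cons_succ, Fin.cons_succ]
      refine ⟨Φ g2, ?_, ?_⟩
      · rw [hmem]
        refine ⟨g2, rfl, by rw [hg0]; exact dvd_zero _, by rw [hg1]; exact dvd_zero _, ?_⟩
        have hta : (fun t => g2 t.succ.succ) = a' := funext hgt
        rw [hta]
        exact ha'
      · rw [hmuΦ, hΘΦb]
        congr 1
        funext t
        refine Fin.cases ?_ (fun t' => ?_) t
        · rw [Fin.cons_zero, hg0, map_zero]
        · refine Fin.cases ?_ (fun t'' => ?_) t'
          · rw [Fin.cons_succ, Fin.cons_zero, Fin.succ_zero_eq_one, hg1, map_zero]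
          · rw [Fin.cons_succ, Fin.cons_succ, hgt t'']
            rfl
  refine ⟨B', hB'alt, ?_⟩
  unfold qB
  rw [himg, Submodule.span_image Θ]
  exact (Submodule.equivMapOfInjective Θ hΘinj _).finrank_eq.symm

end S5x

namespace S5x
open S5

variable {p k : ℕ}

lemma alt_small (hp : p.Prime) (hk : 1 ≤ k) (m : ℕ) (hm : m ≤ 1)
    (B : (Fin m → ZMod (p^k)) →ₗ[ZMod (p^k)] (Fin m → ZMod (p^k)) →ₗ[ZMod (p^k)] ZMod (p^k))
    (hB : ∀ a, B a a = 0) : ∀ x y, B x y = 0 := by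
  intro x y
  interval_cases m
  · have hx : x = 0 := funext fun j => j.elim0
    rw [hx, map_zero, LinearMap.zero_apply]
  · have hx : x = x 0 • (fun _ => (1 : ZMod (p^k))) := funext fun j => by
      have hj : j = 0 := Subsingleton.elim j 0
      subst hj; simp
    have hy : y = y 0 • (fun _ => (1 : ZMod (p^k))) := funext fun j => by
      have hj : j = 0 := Subsingleton.elim j 0
      subst hj; simp
    rw [hx, hy]
    simp only [map_smul, LinearMap.smul_apply, smul_eq_mul]
    rw [hB (fun _ => (1 : ZMod (p^k)))]
    ring

lemma key (hp : p.Prime) (hk : 1 ≤ k) : ∀ m,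
    ∀ B : (Fin m → ZMod (p^k)) →ₗ[ZMod (p^k)] (Fin m → ZMod (p^k)) →ₗ[ZMod (p^k)] ZMod (p^k),
    (∀ a, B a a = 0) → ∀ i, 1 ≤ i → i ≤ k → qB p k m hk B i % 2 = m % 2 := by
  intro m
  induction m using Nat.strong_induction_on with
  | _ m IH =>
    intro B hB i hi1 hik
    by_cases hall : ∀ a b, (p : ZMod (p^k))^i ∣ B a b
    · rw [qB_univ hp hk m B i hall]
    · push_neg at hall
      obtain ⟨x0, y0, hxy0⟩ := hall
      have hP : ∃ t, ∃ a b : Fin m → ZMod (p^k), ¬ (p : ZMod (p^k))^(t+1) ∣ B a b :=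
        ⟨i-1, x0, y0, by rwa [show i-1+1 = i by omega]⟩
      set e := sInf {t | ∃ a b : Fin m → ZMod (p^k), ¬ (p : ZMod (p^k))^(t+1) ∣ B a b} with he
      have heS := Nat.sInf_mem hP
      have hele : e ≤ i - 1 := Nat.sInf_le ⟨x0, y0, by rwa [show i-1+1 = i by omega]⟩
      obtain ⟨x, y, hxy⟩ := heS
      have hdvd : ∀ a b, (p : ZMod (p^k))^e ∣ B a b := by
        rcases Nat.eq_zero_or_pos e with h0 | hpos
        · intro a b; rw [h0, pow_zero]; exact one_dvd _
        · have hnot : e - 1 ∉ {t | ∃ a b : Fin m → ZMod (p^k),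
              ¬ (p : ZMod (p^k))^(t+1) ∣ B a b} :=
            Nat.notMem_of_lt_sInf (by omega)
          intro a b
          by_contra hc
          exact hnot ⟨a, b, by rwa [show e-1+1 = e by omega]⟩
      have hm2 : 2 ≤ m := by
        by_contra hm
        push_neg at hm
        exact hxy0 (by rw [alt_small hp hk m (by omega) B hB x0 y0]; exact dvd_zero _)
      obtain ⟨n, rfl⟩ : ∃ n, m = n + 2 := ⟨m - 2, by omega⟩
      obtain ⟨B', hB'alt, hq⟩ := step hp hk n B hB i e (by omega) hik hdvd x y hxy
      rw [hq, IH n (by omega) B' hB'alt i hi1 hik]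
      omega

end S5x

theorem stmt5_aux (p k m : ℕ) (hp : p.Prime) (hk : 1 ≤ k)
    (B : (Fin m → ZMod (p^k)) →ₗ[ZMod (p^k)] (Fin m → ZMod (p^k)) →ₗ[ZMod (p^k)] ZMod (p^k))
    (hB : ∀ a, B a a = 0) :
    (∀ i, 1 ≤ i → i ≤ k → S5.qinv' p k m B i ≤ m) ∧
    (∀ i j, 1 ≤ i → i ≤ j → j ≤ k → S5.qinv' p k m B j ≤ S5.qinv' p k m B i) ∧
    (∀ i, 1 ≤ i → i ≤ k → S5.qinv' p k m B i % 2 = m % 2) := by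
  refine ⟨?_, ?_, ?_⟩
  · intro i _ _
    rw [S5.qinv'_eq_qB hp hk]
    exact S5.qB_le hp hk m B i
  · intro i j _ hij _
    rw [S5.qinv'_eq_qB hp hk, S5.qinv'_eq_qB hp hk]
    exact S5.qB_mono hp hk m B i j hij
  · intro i hi1 hik
    rw [S5.qinv'_eq_qB hp hk]
    exact S5x.key hp hk m B hB i hi1 hik


/-- The invariants `q_i` of an alternating bilinear form on `(ℤ/p^kℤ)^m` satisfy
`0 ≤ q_k ≤ ⋯ ≤ q_1 ≤ m` and `q_i ≡ m (mod 2)`. -/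
theorem stmt5 (p k m : ℕ) (hp : p.Prime) (hk : 1 ≤ k)
    (B : (Fin m → ZMod (p^k)) →ₗ[ZMod (p^k)] (Fin m → ZMod (p^k)) →ₗ[ZMod (p^k)] ZMod (p^k))
    (hB : ∀ a, B a a = 0) :
    (∀ i, 1 ≤ i → i ≤ k → qinv p k m B i ≤ m) ∧
    (∀ i j, 1 ≤ i → i ≤ j → j ≤ k → qinv p k m B j ≤ qinv p k m B i) ∧
    (∀ i, 1 ≤ i → i ≤ k → qinv p k m B i % 2 = m % 2) := by
  exact stmt5_aux p k m hp hk B hB
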